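/- Let λ, Γ, δ ∈ (0,1), χ = λΓ + (1-λ)(1-δ), ψ = λ(1-χ)/((1-λ)χ), with 0 < χ < 1 and λ < χ. Set π₀ = (χ-λ)/(1-δ), ε₁ = (λ(1-Γ)/χ)·π₀, π₁ = (λ(1-δ(1-λ))/((1-λ)χ))·π₀, and for k ≥ 2, ε_k = ψ^k·((1-λ)(1-Γ)/(1-χ)²)·π₀ and π_k = (λ/(1-λ))·ε_k. Then the mean queue length N = Σ_{k=1}^∞ k·(π_k + ε_k) converges and satisfies N = λ · [(Γ−χ)(χ−λ)² + (1−λ)²(1−Γ)χ] / [(1−λ)(1−χ)(1−δ)(χ−λ)]. -/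

import Mathlib

set_option maxHeartbeats 1000000


/-- The mean primary queue length under the feedback scheme converges
and equals `λ[(Γ-χ)(χ-λ)² + (1-λ)²(1-Γ)χ] / [(1-λ)(1-χ)(1-δ)(χ-λ)]`. -/
theorem mean_queue_length_feedback
    (lam Γ δ χ ψ : ℝ)
    (hlam : 0 < lam) (hlam1 : lam < 1)
    (hΓ : 0 < Γ) (hΓ1 : Γ < 1)
    (hδ : 0 < δ) (hδ1 : δ < 1)
    (hχ : χ = lam * Γ + (1 - lam) * (1 - δ))
    (hψ : ψ = lam * (1 - χ) / ((1 - lam) * χ))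
    (hχpos : 0 < χ) (hχ1 : χ < 1) (hstab : lam < χ)
    (pi eps : ℕ → ℝ)
    (hpi0 : pi 0 = (χ - lam) / (1 - δ))
    (heps0 : eps 0 = 0)
    (heps1 : eps 1 = (lam * (1 - Γ) / χ) * pi 0)
    (hpi1 : pi 1 = (lam * (1 - δ * (1 - lam)) / ((1 - lam) * χ)) * pi 0)
    (hepsk : ∀ k : ℕ, 2 ≤ k → eps k = ψ ^ k * ((1 - lam) * (1 - Γ) / (1 - χ) ^ 2) * pi 0)
    (hpik : ∀ k : ℕ, 2 ≤ k → pi k = (lam / (1 - lam)) * eps k) :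
    HasSum (fun k : ℕ => (k : ℝ) * (pi k + eps k))
      (lam * ((Γ - χ) * (χ - lam) ^ 2 + (1 - lam) ^ 2 * (1 - Γ) * χ)
        / ((1 - lam) * (1 - χ) * (1 - δ) * (χ - lam))) := by
  have h1lam : (0:ℝ) < 1 - lam := by linarith
  have h1χ : (0:ℝ) < 1 - χ := by linarith
  have h1δ : (0:ℝ) < 1 - δ := by linarith
  have hchl : (0:ℝ) < χ - lam := by linarith
  have hψ0 : 0 ≤ ψ := by rw [hψ]; positivity
  have hψ1 : ψ < 1 := by
    rw [hψ, div_lt_one (by positivity)]; nlinarith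
  have h1ψ : 1 - ψ = (χ - lam) / ((1 - lam) * χ) := by
    rw [hψ]; field_simp; ring
  set B : ℝ := ((1 - lam) * (1 - Γ) / (1 - χ) ^ 2) * pi 0 / (1 - lam) with hB
  have hgeo : HasSum (fun k : ℕ => B * ((k : ℝ) * ψ ^ k)) (B * (ψ / (1 - ψ) ^ 2)) :=
    (hasSum_coe_mul_geometric_of_norm_lt_one
      (by rw [Real.norm_eq_abs, abs_of_nonneg hψ0]; exact hψ1)).mul_left B
  have hupd := hgeo.update 1 (pi 1 + eps 1)
  have hfun : Function.update (fun k : ℕ => B * ((k : ℝ) * ψ ^ k)) 1 (pi 1 + eps 1)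
      = fun k : ℕ => (k : ℝ) * (pi k + eps k) := by
    funext k
    match k with
    | 0 => simp
    | 1 => simp [Function.update]
    | (n+2) =>
      rw [Function.update_of_ne (by omega)]
      rw [hpik _ (by omega), hepsk _ (by omega), hB]
      field_simp
      ring
  rw [hfun] at hupd
  have hval : pi 1 + eps 1 - B * ((1 : ℝ) * ψ ^ 1) + B * (ψ / (1 - ψ) ^ 2)
      = lam * ((Γ - χ) * (χ - lam) ^ 2 + (1 - lam) ^ 2 * (1 - Γ) * χ)
        / ((1 - lam) * (1 - χ) * (1 - δ) * (χ - lam)) := by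
    have hδval : δ = 1 - (χ - lam * Γ) / (1 - lam) := by
      field_simp; linarith [hχ]
    have h1 : (0:ℝ) < χ - lam * Γ := by nlinarith
    rw [hpi1, heps1, hpi0, hB, hpi0, h1ψ, hψ, hδval]
    field_simp
    ring
  convert hupd using 1
  · rfl
  rw [← hval]
  norm_num
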